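/- Let G be an abelian group and let χ, χ' be bicharacters on ℤⁿ with values in G such that χ'(x,y) = χ(x,y)·η(x,y) for all x, y ∈ ℤⁿ, where η is a bicharacter on ℤⁿ with values in G satisfying η(x,y)η(y,x) = 1 and η(x,x) = 1 for all x, y ∈ ℤⁿ. Let E = {e₁, …, eₙ} be a basis of ℤⁿ and i ∈ {1, …, n}, and suppose that for every j ≠ i the number m_{ij} := min{m ∈ ℕ₀ | χ(e_i,e_i)^m χ(e_i,e_j)χ(e_j,e_i) = 1, or χ(e_i,e_i)^{m+1} = 1 and χ(e_i,e_i) ≠ 1} exists. Then for every j ≠ i the corresponding number m'_{ij} defined with χ' in place of χ exists and equals m_{ij}; hence the map s_{i,E} (given by s_{i,E}(e_i) = -e_i and s_{i,E}(e_j) = e_j + m_{ij} e_i for j ≠ i) does not depend on the antisymmetric part of the bicharacter. -/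

import Mathlib

/-- The defining condition for the integer `m_{ij}`: either
`χ(x,x)^m χ(x,y) χ(y,x) = 1`, or `χ(x,x)^{m+1} = 1` and `χ(x,x) ≠ 1`. -/
def ReflCond {n : ℕ} {G : Type*} [CommGroup G]
    (χ : (Fin n → ℤ) → (Fin n → ℤ) → G) (x y : Fin n → ℤ) (m : ℕ) : Prop :=
  χ x x ^ m * (χ x y * χ y x) = 1 ∨ (χ x x ^ (m + 1) = 1 ∧ χ x x ≠ 1)

/-- If two bicharacters `χ` and `χ' = χ·η` on `ℤⁿ` differ by an antisymmetric
bicharacter `η` (i.e. `η(x,y)η(y,x) = 1` and `η(x,x) = 1`), then the numbers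
`m_{ij}` defined with respect to `χ'` exist and coincide with those defined with
respect to `χ`; hence the map `s_{i,E}` does not depend on the antisymmetric part
of the bicharacter. -/
theorem reflection_indep_antisymmetric_part {n : ℕ} {G : Type*} [CommGroup G]
    (χ χ' η : (Fin n → ℤ) → (Fin n → ℤ) → G)
    (hχ0l : ∀ e, χ 0 e = 1) (hχ0r : ∀ e, χ e 0 = 1)
    (hχl : ∀ x y z, χ (x + y) z = χ x z * χ y z)
    (hχr : ∀ x y z, χ x (y + z) = χ x y * χ x z)
    (hη0l : ∀ e, η 0 e = 1) (hη0r : ∀ e, η e 0 = 1)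
    (hηl : ∀ x y z, η (x + y) z = η x z * η y z)
    (hηr : ∀ x y z, η x (y + z) = η x y * η x z)
    (hηanti : ∀ x y, η x y * η y x = 1) (hηdiag : ∀ x, η x x = 1)
    (hχ' : ∀ x y, χ' x y = χ x y * η x y)
    (b : Module.Basis (Fin n) ℤ (Fin n → ℤ)) (i : Fin n)
    (hex : ∀ j, j ≠ i → {m : ℕ | ReflCond χ (b i) (b j) m}.Nonempty) :
    (∀ j, j ≠ i → {m : ℕ | ReflCond χ' (b i) (b j) m}.Nonempty ∧
      sInf {m : ℕ | ReflCond χ' (b i) (b j) m} =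
        sInf {m : ℕ | ReflCond χ (b i) (b j) m}) ∧
    (∀ s s' : (Fin n → ℤ) →ₗ[ℤ] (Fin n → ℤ),
      s (b i) = -b i →
      (∀ j, j ≠ i → s (b j) = b j +
        ((sInf {m : ℕ | ReflCond χ (b i) (b j) m} : ℕ) : ℤ) • b i) →
      s' (b i) = -b i →
      (∀ j, j ≠ i → s' (b j) = b j +
        ((sInf {m : ℕ | ReflCond χ' (b i) (b j) m} : ℕ) : ℤ) • b i) →
      s = s') := by
  have hset : ∀ x y, {m : ℕ | ReflCond χ' x y m} = {m : ℕ | ReflCond χ x y m} := by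
    intro x y
    have hd : χ' x x = χ x x := by rw [hχ' x x, hηdiag, mul_one]
    have hp : χ' x y * χ' y x = χ x y * χ y x := by
      rw [hχ' x y, hχ' y x]
      calc χ x y * η x y * (χ y x * η y x)
          = χ x y * χ y x * (η x y * η y x) := mul_mul_mul_comm _ _ _ _
        _ = χ x y * χ y x := by rw [hηanti, mul_one]
    ext m
    simp only [Set.mem_setOf_eq, ReflCond, hd, hp]
  constructor
  · intro j hj
    rw [hset]
    exact ⟨hex j hj, rfl⟩
  · intro s s' hsi hsj hsi' hsj'
    apply b.ext
    intro j
    by_cases h : j = i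
    · rw [h, hsi, hsi']
    · rw [hsj j h, hsj' j h, hset]
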